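/- Every positively 1-homogeneous rank-one convex function f : ℝ^{N×n} → ℝ is bounded below by a linear function; in particular, taking ξ₀ = 0, there exists a linear ℓ with f ≥ ℓ on ℝ^{N×n} and ℓ(0) = f(0) = 0. -/

import Mathlib

open Set

/-- Rank-one convexity: convexity along all directions `a ⊗ b`. -/
def RankOneConvex {N n : ℕ} (f : Matrix (Fin N) (Fin n) ℝ → ℝ) : Prop :=
  ∀ (ξ : Matrix (Fin N) (Fin n) ℝ) (a : Fin N → ℝ) (b : Fin n → ℝ),
    ConvexOn ℝ Set.univ (fun t : ℝ => f (ξ + t • Matrix.vecMulVec a b))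

section AuxiliaryDevelopment

open Filter Topology

namespace KKAux

variable {N n : ℕ}

/-- coordinate basis matrix -/
noncomputable def E (i : Fin N) (j : Fin n) : Matrix (Fin N) (Fin n) ℝ :=
  Matrix.single i j 1

/-- convex along coordinate directions and positively 1-homogeneous -/
def Good (g : Matrix (Fin N) (Fin n) ℝ → ℝ) : Prop :=
  (∀ (z : Matrix (Fin N) (Fin n) ℝ) (i : Fin N) (j : Fin n),
      ConvexOn ℝ Set.univ (fun t : ℝ => g (z + t • E i j))) ∧
  (∀ t : ℝ, 0 < t → ∀ x, g (t • x) = t * g x)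

lemma Good.zero {g : Matrix (Fin N) (Fin n) ℝ → ℝ} (hg : Good g) : g 0 = 0 := by
  have h := hg.2 2 (by norm_num) 0
  rw [smul_zero] at h; linarith

lemma repr (x : Matrix (Fin N) (Fin n) ℝ) :
    ∑ p : Fin N × Fin n, x p.1 p.2 • E p.1 p.2 = x := by
  have h := Matrix.matrix_eq_sum_single x
  rw [Fintype.sum_prod_type]
  calc ∑ i : Fin N, ∑ j : Fin n, x i j • E i j
      = ∑ i : Fin N, ∑ j : Fin n, Matrix.single i j (x i j) := by
        refine Finset.sum_congr rfl fun i _ => Finset.sum_congr rfl fun j _ => ?_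
        rw [E, Matrix.smul_single, smul_eq_mul, mul_one]
    _ = x := h.symm

section helpers

lemma convexOn_sub_const {f : ℝ → ℝ} (h : ConvexOn ℝ Set.univ f) (a : ℝ) :
    ConvexOn ℝ Set.univ (fun t => f t - a) := by
  refine ⟨convex_univ, fun x _ y _ p q hp hq hpq => ?_⟩
  have hcv := h.2 (mem_univ x) (mem_univ y) hp hq hpq
  simp only [smul_eq_mul] at *
  have hpq' : p * a + q * a = a := by rw [← add_mul, hpq, one_mul]
  linarith

lemma convexOn_reparam {f : ℝ → ℝ} (h : ConvexOn ℝ Set.univ f) (a : ℝ) :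
    ConvexOn ℝ Set.univ (fun t => f (t * a)) := by
  refine ⟨convex_univ, fun x _ y _ p q hp hq hpq => ?_⟩
  have := h.2 (mem_univ (x * a)) (mem_univ (y * a)) hp hq hpq
  simp only [smul_eq_mul] at *
  have harg : (p * x + q * y) * a = p * (x * a) + q * (y * a) := by ring
  rw [harg]
  exact this

lemma convexOn_of_tendsto {F : ℕ → ℝ → ℝ} {L : ℝ → ℝ}
    (hF : ∀ m, ConvexOn ℝ Set.univ (F m))
    (hlim : ∀ t, Tendsto (fun m => F m t) atTop (𝓝 (L t))) :
    ConvexOn ℝ Set.univ L := by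
  refine ⟨convex_univ, fun x _ y _ p q hp hq hpq => ?_⟩
  simp only [smul_eq_mul]
  refine le_of_tendsto_of_tendsto' (hlim (p * x + q * y))
    (((hlim x).const_mul p).add ((hlim y).const_mul q)) (fun m => ?_)
  have := (hF m).2 (mem_univ x) (mem_univ y) hp hq hpq
  simp only [smul_eq_mul] at this
  exact this

lemma ratio_tendsto (A B : ℝ) :
    Tendsto (fun m : ℕ => ((m : ℝ) + A) / ((m : ℝ) + B)) atTop (𝓝 1) := by
  have h1 : Tendsto (fun m : ℕ => (m : ℝ) + B) atTop atTop :=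
    tendsto_atTop_add_const_right _ B tendsto_natCast_atTop_atTop
  have h2 : Tendsto (fun m : ℕ => (A - B) / ((m : ℝ) + B)) atTop (𝓝 0) :=
    Tendsto.div_atTop tendsto_const_nhds h1
  have h3 : Tendsto (fun m : ℕ => 1 + (A - B) / ((m : ℝ) + B)) atTop (𝓝 (1 + 0)) :=
    tendsto_const_nhds.add h2
  rw [add_zero] at h3
  refine h3.congr' ?_
  filter_upwards [h1.eventually_gt_atTop 0] with m hm
  field_simp; ring

/-- Key one-dimensional fact: a convex function whose values at `+∞` grow at most
like `T * (c + ε)` for every `ε > 0` has all slopes bounded by `c`. -/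
lemma conv3 (φ : ℝ → ℝ) (hφ : ConvexOn ℝ Set.univ φ) (c : ℝ)
    (hc : ∀ ε : ℝ, 0 < ε → ∃ T₀ : ℝ, ∀ T ≥ T₀, φ T ≤ T * (c + ε))
    (t t' : ℝ) (htt' : t < t') : φ t' ≤ φ t + (t' - t) * c := by
  have hd : 0 < t' - t := by linarith
  refine le_of_forall_pos_le_add (fun ε hε => ?_)
  have hε' : 0 < ε / (t' - t) := by positivity
  obtain ⟨T₀, hT₀⟩ := hc _ hε'
  set A : ℝ := max T₀ (t' + 1) with hA
  -- sequence T m = A + m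
  have hTgt : ∀ m : ℕ, t' < A + m := fun m => by
    have : t' + 1 ≤ A := le_max_right _ _
    have : (0:ℝ) ≤ m := Nat.cast_nonneg m
    linarith
  have hbound : ∀ m : ℕ, φ t' ≤ ((A + m - t') / (A + m - t)) * φ t
      + ((t' - t) / (A + m - t)) * ((A + m) * (c + ε / (t' - t))) := by
    intro m
    have h1 : t < A + m := lt_trans htt' (hTgt m)
    have hden : 0 < A + m - t := by linarith
    have ha : 0 ≤ (A + m - t') / (A + m - t) := by
      apply div_nonneg _ hden.le
      have := hTgt m; linarith
    have hb : 0 ≤ (t' - t) / (A + m - t) := by positivity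
    have hab : (A + m - t') / (A + m - t) + (t' - t) / (A + m - t) = 1 := by
      field_simp; ring
    have hpt : (A + m - t') / (A + m - t) * t + (t' - t) / (A + m - t) * (A + m) = t' := by
      field_simp; ring
    have hcv := hφ.2 (mem_univ t) (mem_univ (A + (m:ℝ))) ha hb hab
    simp only [smul_eq_mul] at hcv
    rw [hpt] at hcv
    have hφT : φ (A + m) ≤ (A + m) * (c + ε / (t' - t)) := by
      apply hT₀
      have : T₀ ≤ A := le_max_left _ _
      have : (0:ℝ) ≤ m := Nat.cast_nonneg m
      linarith
    calc φ t' ≤ (A + m - t') / (A + m - t) * φ t + (t' - t) / (A + m - t) * φ (A + m) := hcv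
      _ ≤ _ := by
          gcongr
  -- limits
  have hlim1 : Tendsto (fun m : ℕ => ((A + m - t') / (A + m - t)) * φ t) atTop (𝓝 (φ t)) := by
    have : Tendsto (fun m : ℕ => ((m : ℝ) + (A - t')) / ((m : ℝ) + (A - t))) atTop (𝓝 1) :=
      ratio_tendsto _ _
    have h := this.mul_const (φ t)
    rw [one_mul] at h
    refine h.congr (fun m => ?_)
    ring_nf
  have hlim2 : Tendsto (fun m : ℕ => ((t' - t) / (A + m - t)) * ((A + m) * (c + ε / (t' - t))))
      atTop (𝓝 ((t' - t) * (c + ε / (t' - t)))) := by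
    have hr : Tendsto (fun m : ℕ => (A + (m:ℝ)) / (A + (m:ℝ) - t)) atTop (𝓝 1) :=
      (ratio_tendsto A (A - t)).congr (fun m => by ring_nf)
    have h := (hr.const_mul ((t' - t) * (c + ε / (t' - t))))
    rw [mul_one] at h
    refine h.congr (fun m => ?_)
    have hden : (0:ℝ) < A + ↑m - t := by
      have := hTgt m; linarith
    field_simp
  have hlim := hlim1.add hlim2
  have hfin : φ t' ≤ φ t + (t' - t) * (c + ε / (t' - t)) := ge_of_tendsto' hlim hbound
  have heq : (t' - t) * (c + ε / (t' - t)) = (t' - t) * c + ε := by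
    field_simp
  rw [heq] at hfin
  linarith

end helpers



lemma Good.vertex_bound {g : Matrix (Fin N) (Fin n) ℝ → ℝ} (hg : Good g)
    (u : Fin N × Fin n → ℝ) (S : Finset (Fin N × Fin n)) :
    ∀ z : Matrix (Fin N) (Fin n) ℝ, ∃ M : ℝ, g z ≤ M ∧
      ∀ l : ℝ, 0 ≤ l → l ≤ 1 →
        g (z + l • ∑ p ∈ S, u p • E p.1 p.2) ≤
          (1 - l) ^ S.card * g z + (1 - (1 - l) ^ S.card) * M := by
  induction S using Finset.induction_on with
  | empty =>
      intro z
      exact ⟨g z, le_rfl, fun l _ _ => by simp⟩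
  | @insert q S hq ih =>
      intro z
      obtain ⟨M₁, hM₁z, hM₁⟩ := ih z
      obtain ⟨M₂, hM₂z, hM₂⟩ := ih (z + u q • E q.1 q.2)
      set gq : ℝ := g (z + u q • E q.1 q.2) with hgq
      set M : ℝ := max M₁ (max M₂ gq) with hM
      have hM1le : M₁ ≤ M := le_max_left _ _
      have hM2le : M₂ ≤ M := le_trans (le_max_left _ _) (le_max_right _ _)
      have hgqle : gq ≤ M := le_trans (le_max_right _ _) (le_max_right _ _)
      refine ⟨M, le_trans hM₁z hM1le, ?_⟩
      intro l hl0 hl1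
      set v : Matrix (Fin N) (Fin n) ℝ := ∑ p ∈ S, u p • E p.1 p.2 with hv
      rw [Finset.sum_insert hq]
      have hpt : z + l • (u q • E q.1 q.2 + v) = (z + l • v) + (l * u q) • E q.1 q.2 := by
        rw [smul_add, mul_smul]; abel
      rw [hpt]
      have hcv := (hg.1 (z + l • v) q.1 q.2).2 (mem_univ (0:ℝ)) (mem_univ (u q))
        (by linarith : (0:ℝ) ≤ 1 - l) hl0 (by ring)
      simp only [smul_eq_mul, mul_zero, zero_add, zero_smul, add_zero] at hcv
      have h1 : g (z + l • v) ≤ (1 - l) ^ S.card * g z + (1 - (1 - l) ^ S.card) * M₁ :=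
        hM₁ l hl0 hl1
      have harg : z + l • v + u q • E q.1 q.2 = (z + u q • E q.1 q.2) + l • v := by abel
      have h2 : g (z + l • v + u q • E q.1 q.2) ≤
          (1 - l) ^ S.card * gq + (1 - (1 - l) ^ S.card) * M₂ := by
        rw [harg]; exact hM₂ l hl0 hl1
      set B : ℝ := (1 - l) ^ S.card with hB
      have hB0 : 0 ≤ B := pow_nonneg (by linarith) _
      have hB1 : B ≤ 1 := pow_le_one₀ (by linarith) (by linarith)
      rw [Finset.card_insert_of_notMem hq, pow_succ]
      have hfin : g (z + l • v + (l * u q) • E q.1 q.2) ≤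
          (1 - l) * ((B * g z + (1 - B) * M₁)) + l * (B * gq + (1 - B) * M₂) := by
        calc g (z + l • v + (l * u q) • E q.1 q.2)
            ≤ (1 - l) * g (z + l • v) + l * g (z + l • v + u q • E q.1 q.2) := hcv
          _ ≤ _ := by
              have := add_le_add (mul_le_mul_of_nonneg_left h1 (by linarith : (0:ℝ) ≤ 1 - l))
                (mul_le_mul_of_nonneg_left h2 hl0)
              exact this
      have hstep : (1 - l) * ((B * g z + (1 - B) * M₁)) + l * (B * gq + (1 - B) * M₂) ≤
          B * (1 - l) * g z + (1 - B * (1 - l)) * M := by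
        nlinarith [mul_nonneg (sub_nonneg.2 hB1) (sub_nonneg.2 hM1le),
          mul_nonneg (sub_nonneg.2 hB1) (sub_nonneg.2 hM2le),
          mul_nonneg hB0 (sub_nonneg.2 hgqle),
          mul_nonneg hl0 (mul_nonneg (sub_nonneg.2 hB1) (sub_nonneg.2 hM2le)),
          mul_nonneg hl0 (mul_nonneg hB0 (sub_nonneg.2 hgqle)),
          mul_nonneg (by linarith : (0:ℝ) ≤ 1 - l)
            (mul_nonneg (sub_nonneg.2 hB1) (sub_nonneg.2 hM1le))]
      calc g (z + l • v + (l * u q) • E q.1 q.2)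
          ≤ (1 - l) * ((B * g z + (1 - B) * M₁)) + l * (B * gq + (1 - B) * M₂) := hfin
        _ ≤ B * (1 - l) * g z + (1 - B * (1 - l)) * M := hstep
        _ = (1 - l) ^ S.card * (1 - l) * g z + (1 - (1 - l) ^ S.card * (1 - l)) * M := by
            rw [hB]

lemma Good.usc {g : Matrix (Fin N) (Fin n) ℝ → ℝ} (hg : Good g)
    (z w : Matrix (Fin N) (Fin n) ℝ) {ε : ℝ} (hε : 0 < ε) :
    ∃ δ : ℝ, 0 < δ ∧ ∀ s : ℝ, 0 < s → s ≤ δ → g (z + s • w) ≤ g z + ε := by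
  obtain ⟨M, hMz, hM⟩ := hg.vertex_bound (fun p => w p.1 p.2) Finset.univ z
  set d : ℕ := (Finset.univ : Finset (Fin N × Fin n)).card with hd
  set D : ℝ := (d : ℝ) * (M - g z) with hD
  have hD0 : 0 ≤ D := mul_nonneg (Nat.cast_nonneg _) (by linarith)
  refine ⟨min 1 (ε / (D + 1)), by positivity, ?_⟩
  intro s hs0 hsδ
  have hs1 : s ≤ 1 := le_trans hsδ (min_le_left _ _)
  have hsε : s * (D + 1) ≤ ε := by
    have h := le_trans hsδ (min_le_right _ _)
    rw [le_div_iff₀ (by linarith : (0:ℝ) < D + 1)] at h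
    exact h
  have hber : 1 - (1 - s) ^ d ≤ (d : ℝ) * s := by
    have h := one_add_mul_le_pow (a := -s) (by linarith) d
    have e : (1 : ℝ) + -s = 1 - s := by ring
    rw [e] at h
    linarith
  have hB0 : (0:ℝ) ≤ (1 - s) ^ d := pow_nonneg (by linarith) _
  have hmain := hM s hs0.le hs1
  rw [repr w] at hmain
  have e2 : (1 - s) ^ d * g z + (1 - (1 - s) ^ d) * M
      = g z + (1 - (1 - s) ^ d) * (M - g z) := by ring
  have h3 : (1 - (1 - s) ^ d) * (M - g z) ≤ ((d : ℝ) * s) * (M - g z) :=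
    mul_le_mul_of_nonneg_right hber (by linarith)
  have e4 : ((d : ℝ) * s) * (M - g z) = s * D := by rw [hD]; ring
  linarith [hmain, e2 ▸ hmain]

lemma Good.ray_bound {g : Matrix (Fin N) (Fin n) ℝ → ℝ} (hg : Good g)
    (zz w : Matrix (Fin N) (Fin n) ℝ) {ε : ℝ} (hε : 0 < ε) :
    ∃ T₀ : ℝ, ∀ T ≥ T₀, g (w + T • zz) ≤ T * (g zz + ε) := by
  obtain ⟨δ, hδ, husc⟩ := hg.usc zz w hε
  refine ⟨max (1/δ) 1, fun T hT => ?_⟩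
  have hT1 : (1:ℝ) ≤ T := le_trans (le_max_right _ _) hT
  have hTpos : (0:ℝ) < T := lt_of_lt_of_le one_pos hT1
  have key : w + T • zz = T • ((1/T) • w + zz) := by
    rw [smul_add, smul_smul, mul_one_div_cancel hTpos.ne', one_smul]
  rw [key, hg.2 T hTpos]
  have h1T : 0 < 1/T := by positivity
  have h1Tδ : 1/T ≤ δ := by
    rw [div_le_iff₀ hTpos]
    have h' : 1/δ ≤ T := le_trans (le_max_left _ _) hT
    rw [div_le_iff₀ hδ] at h'
    linarith
  have husc' := husc (1/T) h1T h1Tδ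
  have harg : (1/T) • w + zz = zz + (1/T) • w := add_comm _ _
  rw [harg]
  exact mul_le_mul_of_nonneg_left husc' hTpos.le

lemma Good.line_le {g : Matrix (Fin N) (Fin n) ℝ → ℝ} (hg : Good g) (r : ℝ)
    (i : Fin N) (j : Fin n) (w : Matrix (Fin N) (Fin n) ℝ) {t t' : ℝ} (h : t ≤ t') :
    g (w + t' • (r • E i j)) ≤ g (w + t • (r • E i j)) + (t' - t) * g (r • E i j) := by
  rcases eq_or_lt_of_le h with rfl | hlt
  · simp
  · have heq : (fun τ : ℝ => g (w + τ • (r • E i j))) = fun τ => g (w + (τ * r) • E i j) := by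
      funext τ; rw [smul_smul]
    have hφ : ConvexOn ℝ Set.univ (fun τ : ℝ => g (w + τ • (r • E i j))) := by
      rw [heq]; exact convexOn_reparam (hg.1 w i j) r
    refine conv3 _ hφ (g (r • E i j)) (fun ε hε => ?_) t t' hlt
    obtain ⟨T₀, hT₀⟩ := hg.ray_bound (r • E i j) w hε
    exact ⟨T₀, hT₀⟩

lemma Good.subadd {g : Matrix (Fin N) (Fin n) ℝ → ℝ} (hg : Good g)
    (w : Matrix (Fin N) (Fin n) ℝ) (r : ℝ) (i : Fin N) (j : Fin n) :
    g (w + r • E i j) ≤ g w + g (r • E i j) := by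
  have := hg.line_le r i j w (le_of_lt one_pos : (0:ℝ) ≤ 1)
  simpa using this

lemma Good.peel {g : Matrix (Fin N) (Fin n) ℝ → ℝ} (hg : Good g)
    (x y : Matrix (Fin N) (Fin n) ℝ) (S : Finset (Fin N × Fin n)) :
    g y - ∑ p ∈ S, g (-(x p.1 p.2 • E p.1 p.2)) ≤
      g (y + ∑ p ∈ S, x p.1 p.2 • E p.1 p.2) := by
  induction S using Finset.induction_on with
  | empty => simp
  | @insert q S hq ih =>
      rw [Finset.sum_insert hq, Finset.sum_insert hq]
      have hsub := hg.subadd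
        (y + (x q.1 q.2 • E q.1 q.2 + ∑ p ∈ S, x p.1 p.2 • E p.1 p.2))
        (-(x q.1 q.2)) q.1 q.2
      have e1 : (y + (x q.1 q.2 • E q.1 q.2 + ∑ p ∈ S, x p.1 p.2 • E p.1 p.2))
          + (-(x q.1 q.2)) • E q.1 q.2 = y + ∑ p ∈ S, x p.1 p.2 • E p.1 p.2 := by
        rw [neg_smul]; abel
      have e2 : (-(x q.1 q.2)) • E q.1 q.2 = -(x q.1 q.2 • E q.1 q.2) := neg_smul _ _
      rw [e1, e2] at hsub
      linarith [ih, hsub]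

lemma Good.gray {g : Matrix (Fin N) (Fin n) ℝ → ℝ} (hg : Good g)
    (R : Matrix (Fin N) (Fin n) ℝ) {t : ℝ} (ht : 0 ≤ t) : g (t • R) = t * g R := by
  rcases eq_or_lt_of_le ht with rfl | h
  · simp [hg.zero]
  · exact hg.2 t h R

lemma iInf_comp_shift (b : ℝ → ℝ) (hb : Antitone b) (L : ℝ) (hL : ∀ t, L ≤ b t)
    (u : ℕ → ℝ) (hu : Tendsto u atTop atTop) :
    ⨅ m : ℕ, b (u m) = ⨅ m : ℕ, b (m : ℝ) := by
  have hbdd1 : BddBelow (Set.range fun m : ℕ => b (u m)) :=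
    ⟨L, by rintro v ⟨m, rfl⟩; exact hL _⟩
  have hbdd2 : BddBelow (Set.range fun m : ℕ => b (m : ℝ)) :=
    ⟨L, by rintro v ⟨m, rfl⟩; exact hL _⟩
  apply le_antisymm
  · refine le_ciInf (fun m => ?_)
    obtain ⟨m', hm'⟩ := (hu.eventually_ge_atTop ((m : ℕ) : ℝ)).exists
    exact ciInf_le_of_le hbdd1 m' (hb hm')
  · refine le_ciInf (fun m => ?_)
    obtain ⟨k, hk⟩ := exists_nat_ge (u m)
    exact ciInf_le_of_le hbdd2 k (hb hk)

lemma ciInf_add_const (f : ℕ → ℝ) (L : ℝ) (hL : ∀ m, L ≤ f m) (a : ℝ) :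
    (⨅ m : ℕ, (f m + a)) = (⨅ m : ℕ, f m) + a := by
  have hbdd : BddBelow (Set.range f) := ⟨L, by rintro v ⟨m, rfl⟩; exact hL m⟩
  have hbdd' : BddBelow (Set.range fun m => f m + a) :=
    ⟨L + a, by rintro v ⟨m, rfl⟩; exact add_le_add (hL m) le_rfl⟩
  apply le_antisymm
  · have h1 : ∀ m, (⨅ k : ℕ, (f k + a)) - a ≤ f m := fun m => by
      have := ciInf_le hbdd' m; linarith
    have := le_ciInf h1; linarith
  · refine le_ciInf (fun m => ?_)
    have := ciInf_le hbdd m; linarith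

lemma ciInf_const_mul (f : ℕ → ℝ) (L : ℝ) (hL : ∀ m, L ≤ f m) {l : ℝ} (hl : 0 < l) :
    (⨅ m : ℕ, l * f m) = l * ⨅ m : ℕ, f m := by
  have hbdd : BddBelow (Set.range f) := ⟨L, by rintro v ⟨m, rfl⟩; exact hL m⟩
  have hbdd' : BddBelow (Set.range fun m => l * f m) :=
    ⟨l * L, by rintro v ⟨m, rfl⟩; exact mul_le_mul_of_nonneg_left (hL m) hl.le⟩
  apply le_antisymm
  · have h1 : ∀ m, (⨅ k : ℕ, l * f k) / l ≤ f m := fun m => by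
      have := ciInf_le hbdd' m
      rw [div_le_iff₀ hl]; linarith
    have h2 := le_ciInf h1
    rw [div_le_iff₀ hl] at h2
    linarith
  · refine le_ciInf (fun m => ?_)
    exact mul_le_mul_of_nonneg_left (ciInf_le hbdd m) hl.le

lemma Good.step {g : Matrix (Fin N) (Fin n) ℝ → ℝ} (hg : Good g) (i₀ : Fin N) (j₀ : Fin n) :
    ∃ h : Matrix (Fin N) (Fin n) ℝ → ℝ, Good h ∧ (∀ x, h x ≤ g x) ∧
      (∃ c : ℝ, ∀ x s, h (x + s • E i₀ j₀) = h x + s * c) ∧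
      (∀ (i : Fin N) (j : Fin n) (c' : ℝ),
        (∀ x s, g (x + s • E i j) = g x + s * c') →
        (∀ x s, h (x + s • E i j) = h x + s * c')) := by
  set R : Matrix (Fin N) (Fin n) ℝ := E i₀ j₀ with hRdef
  set c : ℝ := g R with hcdef
  set K : Matrix (Fin N) (Fin n) ℝ → ℝ :=
    fun x => ∑ p : Fin N × Fin n, g (-(x p.1 p.2 • E p.1 p.2)) with hKdef
  set b : Matrix (Fin N) (Fin n) ℝ → ℝ → ℝ := fun x t => g (x + t • R) - t * c with hbdef
  have hline : ∀ (w : Matrix (Fin N) (Fin n) ℝ) {t t' : ℝ}, t ≤ t' →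
      g (w + t' • R) ≤ g (w + t • R) + (t' - t) * c := by
    intro w t t' htt'
    have h0 := hg.line_le 1 i₀ j₀ w htt'
    rw [one_smul] at h0
    exact h0
  have hanti : ∀ x, Antitone (b x) := by
    intro x t t' htt'
    have := hline x htt'
    simp only [hbdef]
    linarith
  have hKlb : ∀ x t, -(K x) ≤ b x t := by
    intro x t
    rcases le_or_gt t 0 with ht | ht
    · have h1 : b x 0 ≤ b x t := hanti x ht
      have h2 : b x 0 = g x := by simp [hbdef]
      have h3 := hg.peel x 0 Finset.univ
      rw [repr x, zero_add, hg.zero] at h3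
      simp only [hKdef] at *
      linarith
    · have h3 := hg.peel x (t • R) Finset.univ
      rw [repr x] at h3
      have h4 : g (t • R) = t * c := by rw [hg.gray R ht.le, hcdef]
      have h5 : t • R + x = x + t • R := add_comm _ _
      rw [h4, h5] at h3
      simp only [hbdef, hKdef] at *
      linarith
  set hfun : Matrix (Fin N) (Fin n) ℝ → ℝ := fun x => ⨅ m : ℕ, b x (m : ℝ) with hfdef
  have hbddrange : ∀ x, BddBelow (Set.range fun m : ℕ => b x (m : ℝ)) :=
    fun x => ⟨-(K x), by rintro v ⟨m, rfl⟩; exact hKlb x _⟩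
  have hle : ∀ x, hfun x ≤ g x := by
    intro x
    have h1 := ciInf_le (hbddrange x) 0
    have h2 : b x ((0:ℕ):ℝ) = g x := by simp [hbdef]
    rw [h2] at h1
    exact h1
  have hnatanti : ∀ x, Antitone (fun m : ℕ => b x (m : ℝ)) :=
    fun x m m' hmm' => hanti x (by exact_mod_cast hmm')
  have htrans : ∀ x s, hfun (x + s • R) = hfun x + s * c := by
    intro x s
    have e : ∀ m : ℕ, b (x + s • R) (m : ℝ) = b x (s + m) + s * c := by
      intro m
      simp only [hbdef]
      have e2 : x + s • R + (m:ℝ) • R = x + (s + m) • R := by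
        rw [add_smul]; abel
      rw [e2]; ring
    simp only [hfdef]
    rw [iInf_congr e,
      ciInf_add_const (fun m : ℕ => b x (s + m)) (-(K x)) (fun m => hKlb x _) (s * c)]
    congr 1
    exact iInf_comp_shift (b x) (hanti x) (-(K x)) (fun t => hKlb x t) (fun m => s + m)
      (tendsto_atTop_add_const_left _ s tendsto_natCast_atTop_atTop)
  have hhomog : ∀ l : ℝ, 0 < l → ∀ x, hfun (l • x) = l * hfun x := by
    intro l hl x
    have e : ∀ m : ℕ, b (l • x) (m : ℝ) = l * b x (m / l) := by
      intro m
      simp only [hbdef]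
      have e2 : l • x + (m:ℝ) • R = l • (x + ((m:ℝ)/l) • R) := by
        rw [smul_add, smul_smul]
        congr 2
        field_simp
      rw [e2, hg.2 l hl]
      field_simp
    simp only [hfdef]
    rw [iInf_congr e,
      ciInf_const_mul (fun m : ℕ => b x ((m:ℝ) / l)) (-(K x)) (fun m => hKlb x _) hl]
    congr 1
    exact iInf_comp_shift (b x) (hanti x) (-(K x)) (fun t => hKlb x t) (fun m => (m:ℝ) / l)
      (Tendsto.atTop_div_const hl tendsto_natCast_atTop_atTop)
  have hconv : ∀ (z : Matrix (Fin N) (Fin n) ℝ) (i : Fin N) (j : Fin n),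
      ConvexOn ℝ Set.univ (fun t : ℝ => hfun (z + t • E i j)) := by
    intro z i j
    refine convexOn_of_tendsto (F := fun (m : ℕ) (t : ℝ) => b (z + t • E i j) (m : ℝ)) ?_ ?_
    · intro m
      show ConvexOn ℝ Set.univ fun t : ℝ => b (z + t • E i j) (m : ℝ)
      have hcv := hg.1 (z + (m:ℝ) • R) i j
      have heq : (fun t : ℝ => b (z + t • E i j) (m : ℝ))
          = fun t : ℝ => g ((z + (m:ℝ) • R) + t • E i j) - (m:ℝ) * c := by
        funext t
        simp only [hbdef]
        have e2 : z + t • E i j + (m:ℝ) • R = z + (m:ℝ) • R + t • E i j := by abel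
        rw [e2]
      rw [heq]
      exact convexOn_sub_const hcv ((m:ℝ) * c)
    · intro t
      exact tendsto_atTop_ciInf (hnatanti _) (hbddrange _)
  have hpres : ∀ (i : Fin N) (j : Fin n) (c' : ℝ),
      (∀ x s, g (x + s • E i j) = g x + s * c') →
      ∀ x s, hfun (x + s • E i j) = hfun x + s * c' := by
    intro i j c' hgl x s
    have e : ∀ m : ℕ, b (x + s • E i j) (m : ℝ) = b x (m : ℝ) + s * c' := by
      intro m
      simp only [hbdef]
      have e2 : x + s • E i j + (m:ℝ) • R = (x + (m:ℝ) • R) + s • E i j := by abel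
      rw [e2, hgl (x + (m:ℝ) • R) s]
      ring
    simp only [hfdef]
    rw [iInf_congr e,
      ciInf_add_const (fun m : ℕ => b x (m : ℝ)) (-(K x)) (fun m => hKlb x _) (s * c')]
  exact ⟨hfun, ⟨hconv, hhomog⟩, hle, ⟨c, htrans⟩, hpres⟩

lemma main_ind {f : Matrix (Fin N) (Fin n) ℝ → ℝ} (hf : Good f)
    (S : Finset (Fin N × Fin n)) :
    ∃ h : Matrix (Fin N) (Fin n) ℝ → ℝ, Good h ∧ (∀ x, h x ≤ f x) ∧
      ∀ p ∈ S, ∃ c : ℝ, ∀ x s, h (x + s • E p.1 p.2) = h x + s * c := by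
  induction S using Finset.induction_on with
  | empty => exact ⟨f, hf, fun x => le_rfl, by simp⟩
  | @insert q S hq ih =>
      obtain ⟨h, hh, hhf, hS⟩ := ih
      obtain ⟨h', hh', h'h, hnew, hpres⟩ := hh.step q.1 q.2
      refine ⟨h', hh', fun x => le_trans (h'h x) (hhf x), fun p hp => ?_⟩
      rcases Finset.mem_insert.1 hp with rfl | hp'
      · exact hnew
      · obtain ⟨c, hc⟩ := hS p hp'
        exact ⟨c, hpres p.1 p.2 c hc⟩

lemma vecMulVec_single (i : Fin N) (j : Fin n) :
    Matrix.vecMulVec (Pi.single i (1:ℝ)) (Pi.single j (1:ℝ)) = E i j := by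
  ext k l
  simp only [Matrix.vecMulVec_apply, Pi.single_apply, E, Matrix.single,
    Matrix.of_apply]
  by_cases hk : i = k <;> by_cases hl : j = l <;>
    simp [hk, hl, eq_comm]

end KKAux

end AuxiliaryDevelopment

/-- a positively 1-homogeneous rank-one convex function is bounded
below by a linear function supporting it at `0`, and `f 0 = 0`. -/
theorem rankOneConvex_homog_linear_lower_bound
    {N n : ℕ} (f : Matrix (Fin N) (Fin n) ℝ → ℝ)
    (hrc : RankOneConvex f)
    (hhom : ∀ t : ℝ, 0 < t → ∀ ξ : Matrix (Fin N) (Fin n) ℝ, f (t • ξ) = t * f ξ) :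
    f 0 = 0 ∧ ∃ ℓ : Matrix (Fin N) (Fin n) ℝ →ₗ[ℝ] ℝ,
      ℓ 0 = f 0 ∧ ∀ ξ, ℓ ξ ≤ f ξ := by
  have hgood : KKAux.Good f := by
    constructor
    · intro z i j
      have := hrc z (Pi.single i 1) (Pi.single j 1)
      rwa [KKAux.vecMulVec_single] at this
    · exact hhom
  have hf0 : f 0 = 0 := hgood.zero
  refine ⟨hf0, ?_⟩
  obtain ⟨h, hh, hhf, hall⟩ := KKAux.main_ind hgood Finset.univ
  choose c hc using fun p : Fin N × Fin n => hall p (Finset.mem_univ p)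
  have hsum : ∀ S : Finset (Fin N × Fin n), ∀ x : Matrix (Fin N) (Fin n) ℝ,
      h (∑ p ∈ S, x p.1 p.2 • KKAux.E p.1 p.2) = ∑ p ∈ S, c p * x p.1 p.2 := by
    intro S
    induction S using Finset.induction_on with
    | empty => intro x; simpa using hh.zero
    | @insert q S hq ih =>
        intro x
        rw [Finset.sum_insert hq, Finset.sum_insert hq]
        have e : x q.1 q.2 • KKAux.E q.1 q.2 + ∑ p ∈ S, x p.1 p.2 • KKAux.E p.1 p.2
            = (∑ p ∈ S, x p.1 p.2 • KKAux.E p.1 p.2) + x q.1 q.2 • KKAux.E q.1 q.2 :=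
          add_comm _ _
        rw [e, hc q _ (x q.1 q.2), ih x]
        ring
  have hrepr : ∀ x : Matrix (Fin N) (Fin n) ℝ,
      h x = ∑ p : Fin N × Fin n, c p * x p.1 p.2 := by
    intro x
    conv_lhs => rw [← KKAux.repr x]
    exact hsum Finset.univ x
  refine ⟨{ toFun := fun x => ∑ p : Fin N × Fin n, c p * x p.1 p.2,
            map_add' := fun x y => ?_, map_smul' := fun r x => ?_ }, ?_, ?_⟩
  · simp only [Matrix.add_apply, mul_add]
    rw [Finset.sum_add_distrib]
  · simp only [Matrix.smul_apply, smul_eq_mul, RingHom.id_apply]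
    rw [Finset.mul_sum]
    exact Finset.sum_congr rfl (fun p _ => by ring)
  · simp [hf0]
  · intro ξ
    have hξ := hhf ξ
    rw [hrepr ξ] at hξ
    exact hξ
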